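/- Cross-term identity: for any measurable vector field s : ℝ^d → ℝ^d for which both double integrals below are absolutely convergent, ∬ ⟨s(y), ∇_y log p_{Y|X}(y|x)⟩ p_X(x) p_W(y − x) dx dy = ∬ ⟨s(y), ∇ log p_X(x)⟩ p_X(x) p_W(y − x) dx dy, where p_{Y|X}(y|x) = p_W(y − x). -/

import Mathlib

open MeasureTheory Real
open scoped RealInnerProductSpace

variable {F : Type*} [NormedAddCommGroup F] [InnerProductSpace ℝ F] [CompleteSpace F]

lemma myHasGradientAt_log {f : F → ℝ} {g x : _} (hf : HasGradientAt f g x) (hx : f x ≠ 0) :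
    HasGradientAt (fun t => Real.log (f t)) ((f x)⁻¹ • g) x := by
  have h := hf.hasFDerivAt.log hx
  rw [hasGradientAt_iff_hasFDerivAt]
  refine h.congr_fderiv ?_
  ext v
  simp [InnerProductSpace.toDual_apply_apply, real_inner_smul_left]

lemma myHasGradientAt_mul {f g : F → ℝ} {a b : F} {x : F}
    (hf : HasGradientAt f a x) (hg : HasGradientAt g b x) :
    HasGradientAt (fun t => f t * g t) (f x • b + g x • a) x := by
  have h := hf.hasFDerivAt.mul hg.hasFDerivAt
  rw [hasGradientAt_iff_hasFDerivAt]
  refine h.congr_fderiv ?_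
  ext v
  simp [InnerProductSpace.toDual_apply_apply, inner_add_left, real_inner_smul_left]

lemma myHasGradientAt_comp_sub_right {f : F → ℝ} {g : F} {x y : F}
    (hf : HasGradientAt f g (y - x)) :
    HasGradientAt (fun y' => f (y' - x)) g y := by
  rw [hasGradientAt_iff_hasFDerivAt] at *
  have := hf.comp y ((hasFDerivAt_id y).sub_const x)
  exact this

lemma myHasGradientAt_comp_const_sub {f : F → ℝ} {g : F} {x y : F}
    (hf : HasGradientAt f g (y - x)) :
    HasGradientAt (fun x' => f (y - x')) (-g) x := by
  rw [hasGradientAt_iff_hasFDerivAt] at *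
  have h' : HasFDerivAt (fun x' : F => y - x') (0 - ContinuousLinearMap.id ℝ F) x :=
    (hasFDerivAt_const y x).sub (hasFDerivAt_id x)
  have := hf.comp x h'
  refine this.congr_fderiv ?_
  ext v
  simp [InnerProductSpace.toDual_apply_apply, inner_neg_left]


/-- **Cross-term identity**: for any measurable vector field `s` for which both
double integrals are absolutely convergent,
`∬ ⟪s(y), ∇_y log p_{Y|X}(y|x)⟫ p_X(x) p_W(y-x) dx dy
  = ∬ ⟪s(y), ∇ log p_X(x)⟫ p_X(x) p_W(y-x) dx dy`. -/
theorem cross_term_identity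
    (d : ℕ) (hd : 1 ≤ d)
    (pX pW : EuclideanSpace ℝ (Fin d) → ℝ)
    (hpX_pos : ∀ x, 0 < pX x) (hpW_pos : ∀ w, 0 < pW w)
    (hpX_diff : ContDiff ℝ 1 pX) (hpW_diff : ContDiff ℝ 1 pW)
    (hpX_prob : ∫ x, pX x = 1) (hpW_prob : ∫ w, pW w = 1)
    (hInt : ∀ y, Integrable (fun x => pX x * pW (y - x)))
    (hIntGrad : ∀ y, Integrable (fun x => gradient (fun x' => pX x' * pW (y - x')) x))
    (s : EuclideanSpace ℝ (Fin d) → EuclideanSpace ℝ (Fin d))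
    (hs : Measurable s)
    (hconv₁ : Integrable (fun p : EuclideanSpace ℝ (Fin d) × EuclideanSpace ℝ (Fin d) =>
      ⟪s p.2, gradient (fun y' => Real.log (pW (y' - p.1))) p.2⟫ * (pX p.1 * pW (p.2 - p.1))))
    (hconv₂ : Integrable (fun p : EuclideanSpace ℝ (Fin d) × EuclideanSpace ℝ (Fin d) =>
      ⟪s p.2, gradient (fun x' => Real.log (pX x')) p.1⟫ * (pX p.1 * pW (p.2 - p.1)))) :
    (∫ p : EuclideanSpace ℝ (Fin d) × EuclideanSpace ℝ (Fin d),
      ⟪s p.2, gradient (fun y' => Real.log (pW (y' - p.1))) p.2⟫ * (pX p.1 * pW (p.2 - p.1)))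
    = ∫ p : EuclideanSpace ℝ (Fin d) × EuclideanSpace ℝ (Fin d),
      ⟪s p.2, gradient (fun x' => Real.log (pX x')) p.1⟫ * (pX p.1 * pW (p.2 - p.1)) := by
  have hpXd : Differentiable ℝ pX := hpX_diff.differentiable one_ne_zero
  have hpWd : Differentiable ℝ pW := hpW_diff.differentiable one_ne_zero
  have hgX : ∀ x, HasGradientAt pX (gradient pX x) x := fun x => (hpXd x).hasGradientAt
  have hgW : ∀ w, HasGradientAt pW (gradient pW w) w := fun w => (hpWd w).hasGradientAt
  -- differentiability of the joint density in x, for fixed y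
  have hFd : ∀ y, Differentiable ℝ (fun x' => pX x' * pW (y - x')) := fun y =>
    hpXd.mul (hpWd.comp ((differentiable_const y).sub differentiable_id))
  have hFgrad : ∀ y x, HasGradientAt (fun x' => pX x' * pW (y - x'))
      (pX x • (-(gradient pW (y - x))) + pW (y - x) • gradient pX x) x := fun y x =>
    myHasGradientAt_mul (hgX x) (myHasGradientAt_comp_const_sub (hgW (y - x)))
  -- log gradients
  have glogX : ∀ x, gradient (fun x' => Real.log (pX x')) x = (pX x)⁻¹ • gradient pX x :=
    fun x => (myHasGradientAt_log (hgX x) (hpX_pos x).ne').gradient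
  have glogW : ∀ (x y : EuclideanSpace ℝ (Fin d)),
      gradient (fun y' => Real.log (pW (y' - x))) y = (pW (y - x))⁻¹ • gradient pW (y - x) :=
    fun x y => (myHasGradientAt_log (myHasGradientAt_comp_sub_right (hgW (y - x)))
      (hpW_pos _).ne').gradient
  -- pointwise identity
  have key : ∀ p : EuclideanSpace ℝ (Fin d) × EuclideanSpace ℝ (Fin d),
      ⟪s p.2, gradient (fun y' => Real.log (pW (y' - p.1))) p.2⟫ * (pX p.1 * pW (p.2 - p.1))
      - ⟪s p.2, gradient (fun x' => Real.log (pX x')) p.1⟫ * (pX p.1 * pW (p.2 - p.1))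
      = -⟪s p.2, gradient (fun x' => pX x' * pW (p.2 - x')) p.1⟫ := by
    rintro ⟨x, y⟩
    simp only [glogW x y, glogX x, (hFgrad y x).gradient]
    rw [real_inner_smul_right, real_inner_smul_right, inner_add_right, real_inner_smul_right,
      real_inner_smul_right, inner_neg_right]
    have h1 : pX x ≠ 0 := (hpX_pos x).ne'
    have h2 : pW (y - x) ≠ 0 := (hpW_pos (y - x)).ne'
    field_simp
    ring
  -- integral of the x-gradient of the joint density vanishes
  have hzero : ∀ y : EuclideanSpace ℝ (Fin d),
      (∫ x, gradient (fun x' => pX x' * pW (y - x')) x) = 0 := by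
    intro y
    have hfderiv : ∀ x, fderiv ℝ (fun x' => pX x' * pW (y - x')) x
        = InnerProductSpace.toDual ℝ _ (gradient (fun x' => pX x' * pW (y - x')) x) :=
      fun x => ((hFd y x).hasGradientAt.hasFDerivAt).fderiv
    have hfd : ∀ v : EuclideanSpace ℝ (Fin d),
        (∫ x, fderiv ℝ (fun x' => pX x' * pW (y - x')) x v) = 0 := by
      intro v
      have h := integral_mul_fderiv_eq_neg_fderiv_mul_of_integrable
        (f := fun _ : EuclideanSpace ℝ (Fin d) => (1 : ℝ))
        (g := fun x' => pX x' * pW (y - x')) (v := v) (μ := volume)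
        ?_ ?_ ?_ (fun x _ => differentiableAt_const 1) (fun x _ => hFd y x)
      · simpa using h
      · refine (integrable_zero _ _ _).congr (Filter.Eventually.of_forall fun x => ?_)
        simp
      · refine (((innerSL ℝ) v).integrable_comp (hIntGrad y)).congr
          (Filter.Eventually.of_forall fun x => ?_)
        simp only [innerSL_apply_apply, one_mul, hfderiv x, InnerProductSpace.toDual_apply_apply]
        exact real_inner_comm _ _
      · exact (hInt y).congr (Filter.Eventually.of_forall fun x => (one_mul _).symm)
    refine (inner_self_eq_zero (𝕜 := ℝ)).mp ?_
    rw [← integral_inner (hIntGrad y)]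
    rw [← hfd (∫ x, gradient (fun x' => pX x' * pW (y - x')) x)]
    refine integral_congr_ae (Filter.Eventually.of_forall fun x => ?_)
    dsimp only
    rw [hfderiv x]
    simp only [InnerProductSpace.toDual_apply_apply]
    exact real_inner_comm _ _
  -- inner integral vanishes
  have inner0 : ∀ y : EuclideanSpace ℝ (Fin d),
      (∫ x, ⟪s y, gradient (fun x' => pX x' * pW (y - x')) x⟫) = 0 := by
    intro y
    rw [integral_inner (hIntGrad y), hzero y, inner_zero_right]
  -- main computation
  rw [← sub_eq_zero, ← integral_sub hconv₁ hconv₂]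
  have hIntKey : Integrable (fun p : EuclideanSpace ℝ (Fin d) × EuclideanSpace ℝ (Fin d) =>
      ⟪s p.2, gradient (fun x' => pX x' * pW (p.2 - x')) p.1⟫) := by
    refine (hconv₂.sub hconv₁).congr (Filter.Eventually.of_forall fun p => ?_)
    simp only [Pi.sub_apply]
    have := key p
    linarith
  calc (∫ p : EuclideanSpace ℝ (Fin d) × EuclideanSpace ℝ (Fin d),
        (⟪s p.2, gradient (fun y' => Real.log (pW (y' - p.1))) p.2⟫ * (pX p.1 * pW (p.2 - p.1))
        - ⟪s p.2, gradient (fun x' => Real.log (pX x')) p.1⟫ * (pX p.1 * pW (p.2 - p.1))))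
      = ∫ p : EuclideanSpace ℝ (Fin d) × EuclideanSpace ℝ (Fin d),
          -⟪s p.2, gradient (fun x' => pX x' * pW (p.2 - x')) p.1⟫ :=
        integral_congr_ae (Filter.Eventually.of_forall key)
    _ = -∫ p : EuclideanSpace ℝ (Fin d) × EuclideanSpace ℝ (Fin d),
          ⟪s p.2, gradient (fun x' => pX x' * pW (p.2 - x')) p.1⟫ := integral_neg _
    _ = 0 := by
        rw [MeasureTheory.Measure.volume_eq_prod] at hIntKey ⊢
        rw [integral_prod_symm _ hIntKey]
        simp only [inner0, integral_zero, neg_zero]
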